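/- Let Π = ℤ³ be equipped with a nondegenerate symmetric bilinear form ⟨·,·⟩ (Gram matrix a symmetric 3×3 integer matrix with nonzero determinant), extended ℚ-bilinearly to ℚ³, and let Π^∨ = {v ∈ ℚ³ : ⟨v, x⟩ ∈ ℤ for all x ∈ ℤ³} be the dual lattice. Let n ≥ 1 and let w : Π → ℤ/nℤ be a group homomorphism whose order in the group Hom(Π, ℤ/nℤ) is exactly n. Then there exists a primitive element v ∈ Π^∨ (i.e. v ≠ 0 and v/p ∉ Π^∨ for every prime p) such that w(x) = ⟨v, x⟩ mod n for all x ∈ Π. -/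

import Mathlib

open Matrix

/-- Lift lemma: if `a` is coprime to `gcd n d`, there is `c ≡ a (mod n)` coprime to `d`. -/
lemma lift_coprime (n d : ℕ) (hd : d ≠ 0) (a : ℤ)
    (h : IsCoprime a ((Nat.gcd n d : ℕ) : ℤ)) :
    ∃ c : ℤ, (n : ℤ) ∣ c - a ∧ IsCoprime c (d : ℤ) := by
  haveI : NeZero d := ⟨hd⟩
  set m : ℕ := Nat.gcd n d with hm
  have hmd : m ∣ d := Nat.gcd_dvd_right n d
  -- `a` is a unit mod `m`
  have hunit : IsUnit ((a : ZMod m)) := by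
    obtain ⟨u, v, huv⟩ := h
    refine IsUnit.of_mul_eq_one ((u : ZMod m)) ?_
    have : ((u * a + v * m : ℤ) : ZMod m) = ((1 : ℤ) : ZMod m) := congrArg (Int.cast : ℤ → ZMod m) huv
    push_cast at this
    simpa [ZMod.natCast_self, mul_comm] using this
  -- lift to a unit mod `d`
  obtain ⟨ζ, hζ⟩ := ZMod.unitsMap_surjective (m := d) (n := m) hmd hunit.unit
  set b : ℤ := ((ζ : ZMod d).val : ℤ) with hb
  have hbd : IsCoprime b (d : ℤ) := by
    have : Nat.Coprime (ζ : ZMod d).val d := by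
      rw [← ZMod.isUnit_iff_coprime, ZMod.natCast_val, ZMod.cast_id]
      exact ζ.isUnit
    exact Nat.isCoprime_iff_coprime.mpr this
  have hba : (m : ℤ) ∣ b - a := by
    have : ((b : ZMod m)) = ((a : ZMod m)) := by
      have h1 : (ZMod.unitsMap hmd ζ : ZMod m) = (hunit.unit : ZMod m) := by rw [hζ]
      have h2 : (ZMod.unitsMap hmd ζ : ZMod m) = ZMod.castHom hmd (ZMod m) (ζ : ZMod d) := rfl
      rw [h2] at h1
      rw [hb]
      push_cast
      rw [ZMod.natCast_val]
      simpa [IsUnit.unit_spec] using h1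
    exact Int.ModEq.dvd ((ZMod.intCast_eq_intCast_iff _ _ _).mp this).symm
  -- Bezout adjustment
  obtain ⟨k, hk⟩ := hba
  refine ⟨a + (n : ℤ) * (Int.gcdA n d * k), ⟨Int.gcdA n d * k, by ring⟩, ?_⟩
  have hbez : (m : ℤ) = (n : ℤ) * Int.gcdA (n : ℤ) (d : ℤ) + (d : ℤ) * Int.gcdB (n : ℤ) (d : ℤ) := by
    have := Int.gcd_eq_gcd_ab (n : ℤ) (d : ℤ)
    simpa [Int.gcd, hm] using this
  have hc : a + (n : ℤ) * (Int.gcdA n d * k) = b + (d : ℤ) * (-(Int.gcdB (n:ℤ) (d:ℤ) * k)) := by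
    have hb' : b = a + (m : ℤ) * k := by linarith [hk.symm]
    rw [hb', hbez]; ring
  rw [hc]
  exact hbd.add_mul_left_left _

/-- Any triple that is "unimodular mod n" lifts to a coprime triple. -/
lemma coprime_lift3 (n : ℕ) (hn : 1 ≤ n) (a₀ a₁ a₂ : ℤ)
    (h : Nat.gcd (Nat.gcd (Nat.gcd a₀.natAbs a₁.natAbs) a₂.natAbs) n = 1) :
    ∃ c₀ c₁ c₂ : ℤ, (n : ℤ) ∣ c₀ - a₀ ∧ (n : ℤ) ∣ c₁ - a₁ ∧ (n : ℤ) ∣ c₂ - a₂ ∧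
      Nat.gcd (Nat.gcd c₀.natAbs c₁.natAbs) c₂.natAbs = 1 := by
  rcases eq_or_lt_of_le hn with h1 | h2
  · exact ⟨1, 0, 0, by simp [← h1], by simp [← h1], by simp [← h1], by simp⟩
  · set b₀ : ℤ := if a₀ = 0 ∧ a₁ = 0 then (n : ℤ) else a₀ with hb₀
    set d : ℕ := Nat.gcd b₀.natAbs a₁.natAbs with hd
    have hdvd₀ : (n : ℤ) ∣ b₀ - a₀ := by
      rw [hb₀]; split
      · next hc => simp [hc.1]
      · simp
    have hdne : d ≠ 0 := by
      rw [hd, hb₀]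
      split
      · next hc => simp [hc.2, Int.natAbs_natCast]; omega
      · next hc =>
        intro hz
        rw [Nat.gcd_eq_zero_iff, Int.natAbs_eq_zero, Int.natAbs_eq_zero] at hz
        tauto
    have hcop : IsCoprime a₂ ((Nat.gcd n d : ℕ) : ℤ) := by
      rw [Int.isCoprime_iff_gcd_eq_one]
      have : Nat.gcd a₂.natAbs (Nat.gcd n d) = 1 := by
        rw [hd, hb₀]
        split
        · next hc =>
          have h' : Nat.gcd a₂.natAbs n = 1 := by simpa [hc.1, hc.2] using h
          simpa [hc.1, hc.2, Int.natAbs_natCast, Nat.gcd_self] using h'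
        · next hc =>
          rw [Nat.gcd_comm, Nat.gcd_comm n _, Nat.gcd_assoc] at h ⊢
          rw [Nat.gcd_comm a₂.natAbs n] at h
          exact h
      simpa [Int.gcd] using this
    obtain ⟨c₂, hc₂, hc₂d⟩ := lift_coprime n d hdne a₂ hcop
    refine ⟨b₀, a₁, c₂, hdvd₀, by simp, hc₂, ?_⟩
    rw [← hd]
    rw [Int.isCoprime_iff_gcd_eq_one] at hc₂d
    simp only [Int.gcd, Int.natAbs_natCast] at hc₂d
    rw [Nat.gcd_comm] at hc₂d
    exact hc₂d

noncomputable section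

def latticeFormQ (S : Matrix (Fin 3) (Fin 3) ℤ) (a b : Fin 3 → ℚ) : ℚ :=
  a ⬝ᵥ (S.map (Int.cast : ℤ → ℚ)).mulVec b

def intVecQ (x : Fin 3 → ℤ) : Fin 3 → ℚ := fun i => (x i : ℚ)

theorem exact_order_hom_eq_pairing_with_primitive_dual_vector
    (S : Matrix (Fin 3) (Fin 3) ℤ) (hSsymm : S.IsSymm) (hSdet : S.det ≠ 0)
    (n : ℕ) (hn : 1 ≤ n)
    (w : (Fin 3 → ℤ) →+ ZMod n) (hw : addOrderOf w = n) :
    ∃ v : Fin 3 → ℚ,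
      (∀ x : Fin 3 → ℤ, ∃ k : ℤ, latticeFormQ S v (intVecQ x) = (k : ℚ)) ∧
      v ≠ 0 ∧
      (∀ p : ℕ, p.Prime →
        ¬ ∀ x : Fin 3 → ℤ, ∃ k : ℤ, latticeFormQ S ((p : ℚ)⁻¹ • v) (intVecQ x) = (k : ℚ)) ∧
      ∀ x : Fin 3 → ℤ, ∃ k : ℤ,
        latticeFormQ S v (intVecQ x) = (k : ℚ) ∧ w x = (k : ZMod n) := by
  haveI : NeZero n := ⟨by omega⟩
  -- integer lifts of the values of `w` on the standard basis
  set a : Fin 3 → ℤ := fun i => ((w (Pi.single i 1)).val : ℤ) with ha_def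
  have ha : ∀ i, ((a i : ℤ) : ZMod n) = w (Pi.single i 1) := by
    intro i
    simp [ha_def, ZMod.natCast_val, ZMod.cast_id]
  -- `w` is given by pairing with `a`
  have hwx : ∀ x : Fin 3 → ℤ, w x = ((∑ i, x i * a i : ℤ) : ZMod n) := by
    intro x
    have hx : x = ∑ i, Pi.single i (x i) := by
      ext j; simp [Finset.sum_apply, Pi.single_apply]
    conv_lhs => rw [hx]
    rw [map_sum]
    push_cast
    refine Finset.sum_congr rfl fun i _ => ?_
    have : Pi.single i (x i) = x i • (Pi.single i 1 : Fin 3 → ℤ) := by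
      rw [← Pi.single_smul, smul_eq_mul, mul_one]
    rw [this, map_zsmul, ← ha i]
    push_cast
    rw [zsmul_eq_mul]
  -- exact order n implies the gcd condition
  have hgcd : Nat.gcd (Nat.gcd (Nat.gcd (a 0).natAbs (a 1).natAbs) (a 2).natAbs) n = 1 := by
    by_contra hne
    set g := Nat.gcd (Nat.gcd (Nat.gcd (a 0).natAbs (a 1).natAbs) (a 2).natAbs) n with hg
    have hgn : g ∣ n := Nat.gcd_dvd_right _ _
    have hg0 : g ≠ 0 := by
      intro h0
      rw [h0] at hgn
      omega
    have hg2 : 2 ≤ g := by omega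
    set d := n / g with hd
    have hnd : n = d * g := by rw [hd, Nat.div_mul_cancel hgn]
    have hdpos : 0 < d := by
      rcases Nat.eq_zero_or_pos d with h0 | h0
      · rw [h0] at hnd; omega
      · exact h0
    have hdlt : d < n := by
      rw [hd]
      exact Nat.div_lt_self (by omega) hg2
    -- each n ∣ d * a i
    have hna : ∀ i, (n : ℤ) ∣ (d : ℤ) * a i := by
      intro i
      have hgai : (g : ℤ) ∣ a i := by
        have h1 : g ∣ (a i).natAbs := by
          have hX : g ∣ Nat.gcd (Nat.gcd (a 0).natAbs (a 1).natAbs) (a 2).natAbs :=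
            Nat.gcd_dvd_left _ _
          fin_cases i
          · exact hX.trans ((Nat.gcd_dvd_left _ _).trans (Nat.gcd_dvd_left _ _))
          · exact hX.trans ((Nat.gcd_dvd_left _ _).trans (Nat.gcd_dvd_right _ _))
          · exact hX.trans (Nat.gcd_dvd_right _ _)
        exact Int.natAbs_dvd.mp (Int.natCast_dvd_natCast.mpr h1)
      obtain ⟨t, ht⟩ := hgai
      exact ⟨t, by rw [ht, hnd]; push_cast; ring⟩
    have hzero : d • w = 0 := by
      refine AddMonoidHom.ext fun x => ?_
      show d • (w x) = 0
      rw [hwx x]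
      have : (d : ℤ) • ((∑ i, x i * a i : ℤ) : ZMod n) = (((d : ℤ) * ∑ i, x i * a i : ℤ) : ZMod n) := by
        push_cast
        rw [zsmul_eq_mul]
        norm_cast
      rw [← natCast_zsmul, this, ZMod.intCast_zmod_eq_zero_iff_dvd]
      rw [Finset.mul_sum]
      refine Finset.dvd_sum fun i _ => ?_
      have := hna i
      obtain ⟨t, ht⟩ := this
      exact ⟨x i * t, by rw [mul_comm (x i) (a i), ← mul_assoc, ht]; ring⟩
    have := addOrderOf_dvd_of_nsmul_eq_zero hzero
    rw [hw] at this
    have := Nat.le_of_dvd hdpos this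
    omega
  -- lift to a coprime triple
  obtain ⟨c₀, c₁, c₂, hd₀, hd₁, hd₂, hcgcd⟩ := coprime_lift3 n hn (a 0) (a 1) (a 2) hgcd
  set c : Fin 3 → ℤ := ![c₀, c₁, c₂] with hc_def
  have hdvd : ∀ i, (n : ℤ) ∣ c i - a i := by
    intro i; fin_cases i
    · exact hd₀
    · exact hd₁
    · exact hd₂
  -- the dual vector
  set Sq : Matrix (Fin 3) (Fin 3) ℚ := S.map (Int.cast : ℤ → ℚ) with hSq_def
  have hSqdet : Sq.det ≠ 0 := by
    have : Sq.det = ((S.det : ℤ) : ℚ) := (RingHom.map_det (Int.castRingHom ℚ) S).symm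
    rw [this]
    exact_mod_cast hSdet
  have hSu : IsUnit Sq.det := isUnit_iff_ne_zero.mpr hSqdet
  have hSqsymm : Sqᵀ = Sq := by
    rw [hSq_def, ← Matrix.transpose_map, hSsymm.eq]
  set cq : Fin 3 → ℚ := fun i => (c i : ℚ) with hcq_def
  set v : Fin 3 → ℚ := Sq⁻¹ *ᵥ cq with hv_def
  have hpair : ∀ y : Fin 3 → ℚ, latticeFormQ S v y = cq ⬝ᵥ y := by
    intro y
    show v ⬝ᵥ Sq *ᵥ y = cq ⬝ᵥ y
    rw [Matrix.dotProduct_mulVec]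
    congr 1
    rw [← Matrix.mulVec_transpose, hSqsymm, hv_def, Matrix.mulVec_mulVec,
      Matrix.mul_nonsing_inv _ hSu, Matrix.one_mulVec]
  have hpairx : ∀ x : Fin 3 → ℤ, latticeFormQ S v (intVecQ x) = ((∑ i, c i * x i : ℤ) : ℚ) := by
    intro x
    rw [hpair]
    show ∑ i, cq i * (intVecQ x) i = _
    rw [hcq_def]
    push_cast
    rfl
  have hsingle : ∀ j, latticeFormQ S v (intVecQ (Pi.single j 1)) = ((c j : ℤ) : ℚ) := by
    intro j
    rw [hpairx]
    have : (∑ i, c i * (Pi.single j 1 : Fin 3 → ℤ) i) = c j := by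
      simp [Pi.single_apply]
    rw [this]
  have hc0 : c 0 = c₀ := rfl
  have hc1 : c 1 = c₁ := rfl
  have hc2 : c 2 = c₂ := rfl
  refine ⟨v, fun x => ⟨∑ i, c i * x i, hpairx x⟩, ?_, ?_, fun x => ⟨∑ i, c i * x i, hpairx x, ?_⟩⟩
  · -- v ≠ 0
    intro hv0
    have hcz : ∀ j, c j = 0 := by
      intro j
      have h1 := hsingle j
      rw [hv0] at h1
      have h2 : latticeFormQ S 0 (intVecQ (Pi.single j 1)) = 0 := by
        show (0 : Fin 3 → ℚ) ⬝ᵥ _ = 0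
        exact zero_dotProduct _
      rw [h2] at h1
      exact_mod_cast h1.symm
    rw [← hc0, ← hc1, ← hc2, hcz 0, hcz 1, hcz 2] at hcgcd
    simp at hcgcd
  · -- primitivity
    intro p hp hall
    have hpc : ∀ j, (p : ℤ) ∣ c j := by
      intro j
      obtain ⟨k, hk⟩ := hall (Pi.single j 1)
      have h1 : latticeFormQ S ((p : ℚ)⁻¹ • v) (intVecQ (Pi.single j 1))
          = (p : ℚ)⁻¹ * ((c j : ℤ) : ℚ) := by
        show ((p : ℚ)⁻¹ • v) ⬝ᵥ Sq *ᵥ _ = _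
        rw [smul_dotProduct, smul_eq_mul]
        congr 1
        exact hsingle j
      rw [h1] at hk
      have hpne : ((p : ℚ)) ≠ 0 := by exact_mod_cast hp.ne_zero
      have : ((c j : ℤ) : ℚ) = ((p * k : ℤ) : ℚ) := by
        push_cast
        field_simp at hk
        linarith [hk]
      exact ⟨k, by exact_mod_cast this⟩
    have hdvd1 : p ∣ 1 := by
      rw [← hcgcd]
      have habs : ∀ j, p ∣ (c j).natAbs := by
        intro j
        have := Int.natAbs_dvd_natAbs.mpr (hpc j)
        simpa using this
      rw [← hc0, ← hc1, ← hc2]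
      exact Nat.dvd_gcd (Nat.dvd_gcd (habs 0) (habs 1)) (habs 2)
    have h1 := Nat.dvd_one.mp hdvd1
    have h2 := hp.one_lt
    omega
  · -- w x = pairing mod n
    rw [hwx x, ZMod.intCast_eq_intCast_iff]
    rw [Int.modEq_iff_dvd]
    have : (∑ i, c i * x i) - (∑ i, x i * a i) = ∑ i, (c i - a i) * x i := by
      rw [← Finset.sum_sub_distrib]
      exact Finset.sum_congr rfl fun i _ => by ring
    rw [this]
    exact Finset.dvd_sum fun i _ => (hdvd i).mul_right _

end
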